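/- Every non-empty connected graph G has a connected dominating set D and an independent set I ⊆ D with |D| = 2|I| − 1. -/

import Mathlib

private lemma aux_cds {V : Type*} [Fintype V] [DecidableEq V] (G : SimpleGraph V)
    (hG : G.Connected) :
    ∀ n (D I : Finset V), (Finset.univ \ D).card = n → I ⊆ D →
      (G.induce (D : Set V)).Connected →
      (∀ u ∈ I, ∀ w ∈ I, u ≠ w → ¬ G.Adj u w) →
      D.card + 1 = 2 * I.card →
      ∃ D' I' : Finset V, I' ⊆ D' ∧ (G.induce (D' : Set V)).Connected ∧
        (∀ v, v ∉ D' → ∃ u ∈ D', G.Adj v u) ∧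
        (∀ u ∈ I', ∀ w ∈ I', u ≠ w → ¬ G.Adj u w) ∧
        D'.card + 1 = 2 * I'.card := by
  intro n
  induction n using Nat.strong_induction_on with
  | _ n ih =>
    intro D I hn hID hconn hind hcard
    by_cases hdom : ∀ v, v ∉ D → ∃ u ∈ D, G.Adj v u
    · exact ⟨D, I, hID, hconn, hdom, hind, hcard⟩
    · push_neg at hdom
      obtain ⟨v, hvD, hvadj⟩ := hdom
      have hDne : D.Nonempty := by
        obtain ⟨⟨d, hd⟩⟩ := hconn.nonempty
        exact ⟨d, by simpa using hd⟩
      obtain ⟨d, hd⟩ := hDne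
      set S : Set V := {x | x ∈ D ∨ ∃ u ∈ D, G.Adj x u} with hS
      have hdS : d ∉ Sᶜ := by simp [hS, hd]
      have hvS : v ∈ Sᶜ := by
        simp only [hS, Set.mem_compl_iff, Set.mem_setOf_eq, not_or]
        exact ⟨hvD, by push_neg; exact fun u hu => hvadj u hu⟩
      obtain ⟨p⟩ := hG v d
      obtain ⟨dart, _, hy, hz⟩ := p.exists_boundary_dart Sᶜ hvS hdS
      set y := dart.fst with hyd
      set z := dart.snd with hzd
      have hadj : G.Adj y z := dart.adj
      have hyS : y ∉ S := hy
      have hzS : z ∈ S := by simpa using hz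
      have hyD : y ∉ D := fun h => hyS (Or.inl h)
      have hyN : ∀ u ∈ D, ¬ G.Adj y u := by
        intro u hu hadj'
        exact hyS (Or.inr ⟨u, hu, hadj'⟩)
      have hzD : z ∉ D := fun h => hyN z h hadj
      obtain ⟨u, huD, huz⟩ : ∃ u ∈ D, G.Adj z u := by
        rcases hzS with h | h
        · exact absurd h hzD
        · exact h
      have hyz : y ≠ z := fun h => hyS (h ▸ hzS)
      set D' : Finset V := insert y (insert z D) with hD'
      set I' : Finset V := insert y I with hI'
      have hyI : y ∉ I := fun h => hyD (hID h)
      have hcardD' : D'.card = D.card + 2 := by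
        rw [hD', Finset.card_insert_of_notMem (by simp [hyD, hyz]),
          Finset.card_insert_of_notMem hzD]
      have hsub' : I' ⊆ D' := by
        intro x hx
        rcases Finset.mem_insert.1 hx with h | h
        · exact Finset.mem_insert.2 (Or.inl h)
        · exact Finset.mem_insert.2 (Or.inr (Finset.mem_insert.2 (Or.inr (hID h))))
      have hconn' : (G.induce (D' : Set V)).Connected := by
        have h1 : (G.induce ((D : Set V) ∪ {u, z})).Connected :=
          SimpleGraph.induce_union_connected hconn.preconnected
            (SimpleGraph.induce_pair_connected_of_adj huz.symm).preconnected ⟨u, huD, by simp⟩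
        have h2 : (G.induce (((D : Set V) ∪ {u, z}) ∪ {z, y})).Connected :=
          SimpleGraph.induce_union_connected h1.preconnected
            (SimpleGraph.induce_pair_connected_of_adj hadj.symm).preconnected
            ⟨z, by simp, by simp⟩
        have hset : ((D : Set V) ∪ {u, z}) ∪ {z, y} = (D' : Set V) := by
          ext x
          simp only [hD', Finset.coe_insert, Set.mem_union, Set.mem_insert_iff,
            Set.mem_singleton_iff, Finset.mem_coe]
          constructor
          · rintro ((h | rfl | h) | h | h) <;> tauto
          · rintro (h | h | h) <;> tauto
        rwa [hset] at h2
      have hind' : ∀ a ∈ I', ∀ w ∈ I', a ≠ w → ¬ G.Adj a w := by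
        intro a ha w hw hne
        rcases Finset.mem_insert.1 ha with rfl | ha <;>
          rcases Finset.mem_insert.1 hw with rfl | hw
        · exact absurd rfl hne
        · exact hyN w (hID hw)
        · intro h; exact hyN a (hID ha) h.symm
        · exact hind a ha w hw hne
      have hcard' : D'.card + 1 = 2 * I'.card := by
        rw [hcardD', hI', Finset.card_insert_of_notMem hyI]
        omega
      have hlt : (Finset.univ \ D').card < n := by
        rw [← hn]
        apply Finset.card_lt_card
        constructor
        · intro x hx
          simp only [Finset.mem_sdiff, Finset.mem_univ, true_and] at hx ⊢
          intro h; exact hx (Finset.mem_insert.2 (Or.inr (Finset.mem_insert.2 (Or.inr h))))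
        · intro h
          have : z ∈ Finset.univ \ D := by simp [hzD]
          have := h this
          simp [hD'] at this
      exact ih _ hlt D' I' rfl hsub' hconn' hind' hcard'

/-- Every non-empty connected graph G has a connected dominating set D and an independent set
I ⊆ D with |D| = 2|I| - 1. -/
theorem exists_connected_dominating_set_with_half_independent {V : Type*} [Fintype V]
    (G : SimpleGraph V) (hG : G.Connected) :
    ∃ D I : Finset V, I ⊆ D ∧
      (G.induce (D : Set V)).Connected ∧
      (∀ v, v ∉ D → ∃ u ∈ D, G.Adj v u) ∧
      (∀ u ∈ I, ∀ w ∈ I, u ≠ w → ¬ G.Adj u w) ∧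
      D.card + 1 = 2 * I.card := by
  classical
  obtain ⟨v₀⟩ := hG.nonempty
  have hconn1 : (G.induce (({v₀} : Finset V) : Set V)).Connected := by
    haveI : Nonempty ((({v₀} : Finset V) : Set V)) := ⟨⟨v₀, by simp⟩⟩
    refine ⟨fun a b => ?_⟩
    have : a = b := by
      ext
      have ha := a.2; have hb := b.2
      simp only [Finset.coe_singleton, Set.mem_singleton_iff] at ha hb
      rw [ha, hb]
    rw [this]
  have hind1 : ∀ u ∈ ({v₀} : Finset V), ∀ w ∈ ({v₀} : Finset V), u ≠ w → ¬ G.Adj u w := by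
    intro u hu w hw hne
    simp only [Finset.mem_singleton] at hu hw
    exact absurd (hu.trans hw.symm) hne
  exact aux_cds G hG _ {v₀} {v₀} rfl (le_refl _) hconn1 hind1 (by simp)
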